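/- Let E and F be finite-dimensional real inner product spaces and let A, B : E → F be continuous linear maps. Then δ(Γ_A, Γ_B) ≤ 2‖A − B‖, where ‖A − B‖ is the operator norm of A − B. -/

import Mathlib

open Set Filter

/-- The distance `δ(L₁, L₂)`: the Hausdorff distance between `L₁ ∩ 𝕊` and `L₂ ∩ 𝕊`,
where `𝕊` is the unit sphere. -/
noncomputable def sphereDist {X : Type*} [NormedAddCommGroup X] (S T : Set X) : ℝ :=
  Metric.hausdorffDist (S ∩ Metric.sphere 0 1) (T ∩ Metric.sphere 0 1)

/-- The graph `Γ_A = {(u, A u) : u ∈ E}` of a continuous linear map `A : E → F`, as a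
subset of `E × F` equipped with the Euclidean product norm `‖(u,v)‖ = (‖u‖² + ‖v‖²)^(1/2)`. -/
def graphSet {E F : Type*} [NormedAddCommGroup E] [InnerProductSpace ℝ E]
    [NormedAddCommGroup F] [InnerProductSpace ℝ F] (A : E →L[ℝ] F) :
    Set (WithLp 2 (E × F)) :=
  {p | (WithLp.equiv 2 (E × F) p).2 = A (WithLp.equiv 2 (E × F) p).1}

lemma graph_aux {E F : Type*} [NormedAddCommGroup E] [InnerProductSpace ℝ E]
    [NormedAddCommGroup F] [InnerProductSpace ℝ F]
    (A B : E →L[ℝ] F) :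
    ∀ x ∈ graphSet A ∩ Metric.sphere 0 1,
      ∃ y ∈ graphSet B ∩ Metric.sphere 0 1, dist x y ≤ 2 * ‖A - B‖ := by
  rintro x ⟨hxA, hx1⟩
  have hx1 : ‖x‖ = 1 := by simpa using hx1
  set u := (WithLp.equiv 2 (E × F) x).1 with hu
  have hx2 : (WithLp.equiv 2 (E × F) x).2 = A u := hxA
  set r : WithLp 2 (E × F) := (WithLp.equiv 2 (E × F)).symm (u, B u) with hr
  -- the first component of `x` has norm at most 1
  have hnormsq : ‖x‖ ^ 2 = ‖u‖ ^ 2 + ‖A u‖ ^ 2 := by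
    have h2 : ‖x.snd‖ ^ 2 = ‖A u‖ ^ 2 := congrArg (‖·‖ ^ 2) hx2
    rw [WithLp.prod_norm_sq_eq_of_L2, h2]; rfl
  have hu1 : ‖u‖ ≤ 1 := by
    nlinarith [norm_nonneg u, norm_nonneg (A u), sq_nonneg (‖u‖ - 1)]
  have hAB : ‖A u - B u‖ ≤ ‖A - B‖ := by
    have := (A - B).le_opNorm u
    simp only [ContinuousLinearMap.sub_apply] at this
    calc ‖A u - B u‖ ≤ ‖A - B‖ * ‖u‖ := this
      _ ≤ ‖A - B‖ * 1 := by
          exact mul_le_mul_of_nonneg_left hu1 (norm_nonneg _)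
      _ = ‖A - B‖ := mul_one _
  -- `x - r = (0, A u - B u)`
  have hxr : ‖x - r‖ = ‖A u - B u‖ := by
    have : x - r = (WithLp.equiv 2 (E × F)).symm (0, A u - B u) := by
      apply (WithLp.equiv 2 (E × F)).injective
      simp only [(fun a b => rfl : ∀ a b : WithLp 2 (E × F), WithLp.equiv 2 (E × F) (a - b) = WithLp.equiv 2 (E × F) a - WithLp.equiv 2 (E × F) b), hr, Equiv.apply_symm_apply]
      ext
      · exact sub_eq_zero_of_eq rfl
      · exact congrArg (· - B u) hx2
    rw [this, WithLp.prod_norm_eq_of_L2]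
    simp [Real.sqrt_sq (norm_nonneg _)]
  -- `u ≠ 0`, hence `r ≠ 0`
  have hune : u ≠ 0 := by
    intro h
    rw [h] at hnormsq
    simp [hx1] at hnormsq
  have hrne : r ≠ 0 := by
    intro h
    apply hune
    have : (WithLp.equiv 2 (E × F)) r = 0 := by rw [h]; simp
    rw [hr, Equiv.apply_symm_apply] at this
    exact congrArg Prod.fst this
  have hrpos : (0 : ℝ) < ‖r‖ := norm_pos_iff.mpr hrne
  set y : WithLp 2 (E × F) := ‖r‖⁻¹ • r with hy
  refine ⟨y, ⟨?_, ?_⟩, ?_⟩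
  · -- y ∈ graphSet B
    show (WithLp.equiv 2 (E × F) y).2 = B (WithLp.equiv 2 (E × F) y).1
    rw [hy, WithLp.equiv_apply, WithLp.ofLp_smul, ← WithLp.equiv_apply, hr, Equiv.apply_symm_apply]
    simp [map_smul]
  · -- ‖y‖ = 1
    simp only [Metric.mem_sphere, dist_zero_right, hy, norm_smul, norm_inv, norm_norm]
    exact inv_mul_cancel₀ (ne_of_gt hrpos)
  · -- distance bound
    have hry : ‖r - y‖ = |‖r‖ - 1| := by
      have : r - y = (1 - ‖r‖⁻¹) • r := by rw [hy, sub_smul, one_smul]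
      rw [this, norm_smul, Real.norm_eq_abs]
      have habs : |1 - ‖r‖⁻¹| * ‖r‖ = |(1 - ‖r‖⁻¹) * ‖r‖| := by
        rw [abs_mul, abs_of_pos hrpos]
      rw [habs, sub_mul, one_mul, inv_mul_cancel₀ (ne_of_gt hrpos)]
    have h2 : |‖r‖ - 1| ≤ ‖A u - B u‖ := by
      calc |‖r‖ - 1| = |‖r‖ - ‖x‖| := by rw [hx1]
        _ ≤ ‖r - x‖ := abs_norm_sub_norm_le r x
        _ = ‖x - r‖ := norm_sub_rev r x
        _ = ‖A u - B u‖ := hxr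
    calc dist x y ≤ dist x r + dist r y := dist_triangle x r y
      _ = ‖x - r‖ + ‖r - y‖ := by rw [dist_eq_norm, dist_eq_norm]
      _ ≤ ‖A u - B u‖ + ‖A u - B u‖ := by rw [hxr]; linarith [hry ▸ h2]
      _ ≤ 2 * ‖A - B‖ := by linarith

/-- The Grassmannian distance between the graphs of two continuous linear maps is at most
twice the operator norm of their difference. -/
theorem graph_sphereDist_le {E F : Type*} [NormedAddCommGroup E] [InnerProductSpace ℝ E]
    [NormedAddCommGroup F] [InnerProductSpace ℝ F]
    [FiniteDimensional ℝ E] [FiniteDimensional ℝ F]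
    (A B : E →L[ℝ] F) :
    sphereDist (graphSet A) (graphSet B) ≤ 2 * ‖A - B‖ := by
  apply Metric.hausdorffDist_le_of_mem_dist (by positivity)
  · exact graph_aux A B
  · intro x hx
    obtain ⟨y, hy, hd⟩ := graph_aux B A x hx
    exact ⟨y, hy, by rwa [norm_sub_rev] at hd⟩
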